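/- Let p : U → ℝ ∪ {+∞} be proper closed convex on a finite-dimensional real inner product space U, let Q̂₁₁ be a self-adjoint positive definite operator on U, let φ be affine-plus-quadratic of the form φ(u) = ⟨g, u⟩ + (1/2)‖u - u₀‖²_{Q̂₁₁} for fixed g, u₀ ∈ U, and let δ ∈ U. If ũ minimizes p(u) + φ(u) + ⟨δ, u⟩ and ū minimizes p(u) + φ(u), then ‖Q̂₁₁^{1/2}(ũ - ū)‖ ≤ ‖Q̂₁₁^{-1/2} δ‖. -/

import Mathlib

private lemma aux_le_zero (a c : ℝ) (h : ∀ t : ℝ, 0 < t → t ≤ 1 → a ≤ t * c) : a ≤ 0 := by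
  by_contra hpos
  push_neg at hpos
  rcases le_or_gt c 0 with hc | hc
  · have := h 1 one_pos le_rfl
    nlinarith
  · have ht0 : (0:ℝ) < min 1 (a / (2 * c)) := by
      apply lt_min one_pos
      positivity
    have := h (min 1 (a / (2 * c))) ht0 (min_le_left _ _)
    have h2 : min 1 (a / (2 * c)) * c ≤ (a / (2 * c)) * c :=
      mul_le_mul_of_nonneg_right (min_le_right _ _) hc.le
    have h3 : (a / (2 * c)) * c = a / 2 := by field_simp
    nlinarith

/-- Perturbation bound for minimizers of a convex function plus a positive
definite quadratic: `‖Q̂₁₁^{1/2}(ũ - ū)‖ ≤ ‖Q̂₁₁^{-1/2} δ‖`, where `R = Q̂₁₁^{1/2}`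
and `Rinv = Q̂₁₁^{-1/2}`. -/
theorem inexact_minimizer_perturbation
    {U : Type*} [NormedAddCommGroup U] [InnerProductSpace ℝ U] [FiniteDimensional ℝ U]
    (p : U → ℝ) (hpconv : ConvexOn ℝ Set.univ p) (hplsc : LowerSemicontinuous p)
    (Q : U →ₗ[ℝ] U)
    (hQsa : ∀ x y : U, (inner ℝ (Q x) y : ℝ) = inner ℝ x (Q y))
    (hQpd : ∀ x : U, x ≠ 0 → 0 < (inner ℝ x (Q x) : ℝ))
    -- R is the positive semidefinite square root of Q, Rinv its inverse
    (R Rinv : U →ₗ[ℝ] U)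
    (hRsa : ∀ x y : U, (inner ℝ (R x) y : ℝ) = inner ℝ x (R y))
    (hRpsd : ∀ x : U, 0 ≤ (inner ℝ x (R x) : ℝ))
    (hRsq : ∀ x : U, R (R x) = Q x)
    (hRinv : ∀ x : U, R (Rinv x) = x ∧ Rinv (R x) = x)
    (g u₀ δ : U)
    (φ : U → ℝ)
    (hφ : ∀ u, φ u = (inner ℝ g u : ℝ) + 1 / 2 * (inner ℝ (u - u₀) (Q (u - u₀)) : ℝ))
    (ut ub : U)
    (hut : ∀ u : U, p ut + φ ut + (inner ℝ δ ut : ℝ) ≤ p u + φ u + (inner ℝ δ u : ℝ))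
    (hub : ∀ u : U, p ub + φ ub ≤ p u + φ u) :
    ‖R (ut - ub)‖ ≤ ‖Rinv δ‖ := by
  set d : U := ut - ub with hd
  -- expansion of the quadratic form
  have hexp : ∀ (a : U) (t : ℝ), (inner ℝ (a + t • d) (Q (a + t • d)) : ℝ)
      = (inner ℝ a (Q a) : ℝ) + 2 * t * (inner ℝ d (Q a) : ℝ) + t ^ 2 * (inner ℝ d (Q d) : ℝ) := by
    intro a t
    have hsym : (inner ℝ a (Q d) : ℝ) = (inner ℝ d (Q a) : ℝ) := by
      rw [← hQsa d a, real_inner_comm]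
    simp only [map_add, map_smul, inner_add_left, inner_add_right, real_inner_smul_left,
      real_inner_smul_right, hsym]
    ring
  have key : ∀ t : ℝ, 0 < t → t ≤ 1 →
      (inner ℝ d (Q d) : ℝ) + (inner ℝ δ d : ℝ) ≤ t * (inner ℝ d (Q d) : ℝ) := by
    intro t ht0 ht1
    have h1 := hub (ub + t • d)
    have h2 := hut (ut - t • d)
    -- convexity bounds on p
    have hc1 : p (ub + t • d) ≤ (1 - t) * p ub + t * p ut := by
      have := hpconv.2 (Set.mem_univ ub) (Set.mem_univ ut) (by linarith) ht0.le
        (by ring : (1 - t) + t = 1)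
      have heq : (1 - t) • ub + t • ut = ub + t • d := by rw [hd]; module
      rwa [heq] at this
    have hc2 : p (ut - t • d) ≤ (1 - t) * p ut + t * p ub := by
      have := hpconv.2 (Set.mem_univ ut) (Set.mem_univ ub) (by linarith) ht0.le
        (by ring : (1 - t) + t = 1)
      have heq : (1 - t) • ut + t • ub = ut - t • d := by rw [hd]; module
      rwa [heq] at this
    -- φ expansions
    have hφ1 : φ (ub + t • d) = φ ub + t * (inner ℝ g d : ℝ)
        + t * (inner ℝ d (Q (ub - u₀)) : ℝ) + t ^ 2 / 2 * (inner ℝ d (Q d) : ℝ) := by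
      rw [hφ, hφ]
      have heq : ub + t • d - u₀ = (ub - u₀) + t • d := by abel
      rw [heq, hexp, inner_add_right, real_inner_smul_right]
      ring
    have hφ2 : φ (ut - t • d) = φ ut - t * (inner ℝ g d : ℝ)
        - t * (inner ℝ d (Q (ut - u₀)) : ℝ) + t ^ 2 / 2 * (inner ℝ d (Q d) : ℝ) := by
      rw [hφ, hφ]
      have heq : ut - t • d - u₀ = (ut - u₀) + (-t) • d := by
        rw [neg_smul]; abel
      rw [heq, hexp, inner_sub_right, real_inner_smul_right]
      ring
    have hδ2 : (inner ℝ δ (ut - t • d) : ℝ) = (inner ℝ δ ut : ℝ) - t * (inner ℝ δ d : ℝ) := by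
      rw [inner_sub_right, real_inner_smul_right]
    have hB : (inner ℝ d (Q (ub - u₀)) : ℝ) - (inner ℝ d (Q (ut - u₀)) : ℝ)
        = - (inner ℝ d (Q d) : ℝ) := by
      rw [← inner_sub_right, ← map_sub]
      have : ub - u₀ - (ut - u₀) = -d := by rw [hd]; abel
      rw [this, map_neg, inner_neg_right]
    rw [hφ1] at h1
    rw [hφ2, hδ2] at h2
    -- combine
    have hsum : 0 ≤ t * ((inner ℝ d (Q (ub - u₀)) : ℝ) - (inner ℝ d (Q (ut - u₀)) : ℝ))
        + t ^ 2 * (inner ℝ d (Q d) : ℝ) - t * (inner ℝ δ d : ℝ) := by nlinarith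
    rw [hB] at hsum
    nlinarith
  have hKS : (inner ℝ d (Q d) : ℝ) + (inner ℝ δ d : ℝ) ≤ 0 :=
    aux_le_zero _ _ key
  have hnorm : ‖R d‖ ^ 2 = (inner ℝ d (Q d) : ℝ) := by
    rw [← real_inner_self_eq_norm_sq, hRsa, hRsq]
  have hS : (inner ℝ δ d : ℝ) = (inner ℝ (Rinv δ) (R d) : ℝ) := by
    conv_lhs => rw [← (hRinv δ).1]
    rw [hRsa]
  have hCS : - (inner ℝ (Rinv δ) (R d) : ℝ) ≤ ‖Rinv δ‖ * ‖R d‖ := by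
    have := abs_real_inner_le_norm (Rinv δ) (R d)
    have := neg_abs_le (inner ℝ (Rinv δ) (R d) : ℝ)
    linarith
  have : ‖R d‖ ^ 2 ≤ ‖Rinv δ‖ * ‖R d‖ := by
    rw [hnorm]; rw [hS] at hKS; linarith
  nlinarith [norm_nonneg (R d), norm_nonneg (Rinv δ)]
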